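/- Let λ_2 ∈ (0,1), s ≥ 6 an integer, and t ≥ s+1 an integer with t−1 ≥ s²; write σ = λ_2² and suppose 3(s−1)²σ^{s−4} ≤ σ^{s−5} (i.e., σ ≤ 1/(3(s−1)²)). Then (σ^{s-1} + (s−1)σ^{s-2} + (s−1)²σ^{s-4})^{⌊(t-1)/s⌋} ≤ σ^{(1 − 5/s)(1 − s/(t-1))(t-1)}. -/

import Mathlib

/-- Final-bias computation in Ta-Shma's construction: with `σ = λ₂²`, `s ≥ 6`,
`t - 1 ≥ s²`, and `3(s-1)²σ^(s-4) ≤ σ^(s-5)`, the per-block norm bound raised to the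
number `⌊(t-1)/s⌋` of blocks is at most `σ^((1 - 5/s)(1 - s/(t-1))(t-1))`. -/
theorem stmt_17 (lam2 : ℝ) (hl0 : 0 < lam2) (hl1 : lam2 < 1)
    (s t : ℕ) (hs : 6 ≤ s) (ht : s + 1 ≤ t) (hts : s ^ 2 ≤ t - 1)
    (h3 : 3 * ((s : ℝ) - 1) ^ 2 * (lam2 ^ 2) ^ (s - 4) ≤ (lam2 ^ 2) ^ (s - 5)) :
    ((lam2 ^ 2) ^ (s - 1) + ((s : ℝ) - 1) * (lam2 ^ 2) ^ (s - 2) +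
        ((s : ℝ) - 1) ^ 2 * (lam2 ^ 2) ^ (s - 4)) ^ ((t - 1) / s)
      ≤ (lam2 ^ 2) ^
          ((1 - 5 / (s : ℝ)) * (1 - (s : ℝ) / ((t : ℝ) - 1)) * ((t : ℝ) - 1)) := by
  set σ : ℝ := lam2 ^ 2 with hσdef
  have hσ0 : 0 < σ := by positivity
  have hσ1 : σ < 1 := by
    have := pow_lt_one₀ hl0.le hl1 (two_ne_zero)
    simpa [hσdef] using this
  clear_value σ
  have hS6 : (6:ℝ) ≤ (s:ℝ) := by exact_mod_cast hs
  have hs1 : (1:ℝ) ≤ ((s:ℝ) - 1) := by linarith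
  -- trinomial bound
  have hmono : σ ^ (s-1) ≤ σ ^ (s-4) := pow_le_pow_of_le_one hσ0.le hσ1.le (by omega)
  have hmono2 : σ ^ (s-2) ≤ σ ^ (s-4) := pow_le_pow_of_le_one hσ0.le hσ1.le (by omega)
  have hσ4 : (0:ℝ) ≤ σ ^ (s-4) := by positivity
  have hsq : (1:ℝ) ≤ ((s:ℝ)-1)^2 := by nlinarith
  have h1 : σ ^ (s-1) ≤ ((s:ℝ)-1)^2 * σ ^ (s-4) :=
    hmono.trans (le_mul_of_one_le_left hσ4 hsq)
  have h2 : ((s:ℝ)-1) * σ ^ (s-2) ≤ ((s:ℝ)-1)^2 * σ ^ (s-4) :=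
    mul_le_mul (by nlinarith) hmono2 (by positivity) (by positivity)
  have htri : σ ^ (s-1) + ((s:ℝ)-1) * σ ^ (s-2) + ((s:ℝ)-1)^2 * σ ^ (s-4) ≤ σ ^ (s-5) := by
    nlinarith
  have htrinn : (0:ℝ) ≤ σ ^ (s-1) + ((s:ℝ)-1) * σ ^ (s-2) + ((s:ℝ)-1)^2 * σ ^ (s-4) := by
    positivity
  set k : ℕ := (t - 1) / s with hkdef
  have step1 : (σ ^ (s-1) + ((s:ℝ)-1) * σ ^ (s-2) + ((s:ℝ)-1)^2 * σ ^ (s-4)) ^ k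
      ≤ (σ ^ (s-5)) ^ k := pow_le_pow_left₀ htrinn htri k
  rw [← pow_mul] at step1
  refine step1.trans ?_
  have hcast : (σ : ℝ) ^ ((s-5) * k) = σ ^ ((((s-5) * k : ℕ) : ℝ)) :=
    (Real.rpow_natCast σ _).symm
  rw [hcast]
  apply Real.rpow_le_rpow_of_exponent_ge hσ0 hσ1.le
  -- now the exponent inequality
  have ht1 : 1 ≤ t := by omega
  have hT : ((t:ℝ) - 1) = ((t - 1 : ℕ) : ℝ) := by
    push_cast [Nat.cast_sub ht1]; ring
  have hdm : s * k + (t - 1) % s = t - 1 := Nat.div_add_mod (t-1) s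
  have hmod : (t - 1) % s < s := Nat.mod_lt _ (by omega)
  have hTr : ((t:ℝ) - 1) = (s:ℝ) * (k:ℝ) + (((t-1) % s : ℕ) : ℝ) := by
    rw [hT]; exact_mod_cast hdm.symm
  have hr0 : (0:ℝ) ≤ (((t-1) % s : ℕ) : ℝ) := by positivity
  have hrS : (((t-1) % s : ℕ) : ℝ) < (s:ℝ) := by exact_mod_cast hmod
  have hTpos : (0:ℝ) < (t:ℝ) - 1 := by
    have : (s:ℝ)^2 ≤ ((t-1:ℕ):ℝ) := by exact_mod_cast hts
    rw [hT]; nlinarith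
  have hcast2 : (((s-5) * k : ℕ) : ℝ) = ((s:ℝ) - 5) * (k:ℝ) := by
    push_cast [Nat.cast_sub (by omega : 5 ≤ s)]; ring
  rw [hcast2]
  have hSne : (s:ℝ) ≠ 0 := by linarith
  have hTne : (t:ℝ) - 1 ≠ 0 := ne_of_gt hTpos
  have hE : (1 - 5 / (s:ℝ)) * (1 - (s:ℝ) / ((t:ℝ) - 1)) * ((t:ℝ) - 1)
      = (((s:ℝ) - 5) / (s:ℝ)) * (((t:ℝ) - 1) - (s:ℝ)) := by
    field_simp
  rw [hE]
  have hTS : ((t:ℝ) - 1) - (s:ℝ) ≤ (s:ℝ) * (k:ℝ) := by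
    rw [hTr]; linarith
  have h5 : (0:ℝ) ≤ ((s:ℝ) - 5) / (s:ℝ) := by
    apply div_nonneg <;> linarith
  calc (((s:ℝ) - 5) / (s:ℝ)) * (((t:ℝ) - 1) - (s:ℝ))
      ≤ (((s:ℝ) - 5) / (s:ℝ)) * ((s:ℝ) * (k:ℝ)) := by
        exact mul_le_mul_of_nonneg_left hTS h5
    _ = ((s:ℝ) - 5) * (k:ℝ) := by field_simp
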